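/- Fix i ≥ 1 and let φ : R → R be a 𝕜-linear map with φ(m^j) ⊆ m^{j+i} for all j ≥ 0. Then 1 + φ is a 𝕜-algebra automorphism of R if and only if φ satisfies the 'almost Leibniz rule' φ(f₁f₂) = φ(f₁)f₂ + f₁φ(f₂) + φ(f₁)φ(f₂) for all f₁, f₂ ∈ R. Consequently, the group Aut^{(i)}_𝕜(R) of 𝕜-algebra automorphisms g with g − 1 and g^{-1} − 1 mapping m^j into m^{j+i} for all j equals {1 + φ : φ 𝕜-linear, φ(m^j) ⊆ m^{j+i} for all j, and φ satisfies the almost Leibniz rule}. -/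

import Mathlib

/-- The maximal ideal `m = (x_1, …, x_p)` of the formal power series ring. -/
noncomputable def mIdeal (𝕜 : Type*) [CommRing 𝕜] (p : ℕ) : Ideal (MvPowerSeries (Fin p) 𝕜) :=
  Ideal.span (Set.range (MvPowerSeries.X : Fin p → MvPowerSeries (Fin p) 𝕜))

/-- The 'almost Leibniz rule' for a map `φ`. -/
def AlmostLeibniz {𝕜 : Type*} [CommRing 𝕜] {p : ℕ}
    (φ : MvPowerSeries (Fin p) 𝕜 →ₗ[𝕜] MvPowerSeries (Fin p) 𝕜) : Prop :=
  ∀ f₁ f₂ : MvPowerSeries (Fin p) 𝕜,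
    φ (f₁ * f₂) = φ f₁ * f₂ + f₁ * φ f₂ + φ f₁ * φ f₂

namespace S2Aux

open MvPowerSeries Finsupp


variable {𝕜 : Type*} [CommRing 𝕜] {p : ℕ}

lemma degree_add (a b : Fin p →₀ ℕ) : (a + b).degree = a.degree + b.degree := by
  simp [degree_eq_weight_one, map_add]

/-- The ideal of power series of order `≥ j`. -/
def J (𝕜 : Type*) [CommRing 𝕜] (p : ℕ) (j : ℕ) : Ideal (MvPowerSeries (Fin p) 𝕜) where
  carrier := {f | ∀ d : Fin p →₀ ℕ, d.degree < j → MvPowerSeries.coeff d f = 0}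
  add_mem' := fun ha hb d hd => by simp [map_add, ha d hd, hb d hd]
  zero_mem' := fun d hd => by simp
  smul_mem' := by
    intro c f hf d hd
    rw [smul_eq_mul, coeff_mul]
    apply Finset.sum_eq_zero
    intro q hq
    rw [Finset.HasAntidiagonal.mem_antidiagonal] at hq
    have h2 : q.2.degree < j := by
      apply lt_of_le_of_lt _ hd
      rw [← hq, degree_add]; exact Nat.le_add_left _ _
    rw [hf q.2 h2, mul_zero]

lemma mem_J_iff {j : ℕ} {f : MvPowerSeries (Fin p) 𝕜} :
    f ∈ J 𝕜 p j ↔ ∀ d : Fin p →₀ ℕ, d.degree < j → MvPowerSeries.coeff d f = 0 :=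
  Iff.rfl

lemma mul_mem_J {a b : ℕ} {f g : MvPowerSeries (Fin p) 𝕜} (hf : f ∈ J 𝕜 p a)
    (hg : g ∈ J 𝕜 p b) : f * g ∈ J 𝕜 p (a + b) := by
  intro d hd
  rw [coeff_mul]
  apply Finset.sum_eq_zero
  intro q hq
  rw [Finset.HasAntidiagonal.mem_antidiagonal] at hq
  have hsum : q.1.degree + q.2.degree < a + b := by rw [← degree_add, hq]; exact hd
  rcases lt_or_ge q.1.degree a with h | h
  · rw [hf q.1 h, zero_mul]
  · rw [hg q.2 (by omega), mul_zero]

lemma pow_le_J (j : ℕ) : (mIdeal 𝕜 p) ^ j ≤ J 𝕜 p j := by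
  induction j with
  | zero => intro f _ d hd; omega
  | succ j ih =>
    rw [pow_succ]
    apply Ideal.mul_le.mpr
    intro r hr s hs
    have hr' : r ∈ J 𝕜 p j := ih hr
    have hs' : s ∈ J 𝕜 p 1 := by
      revert hs
      apply Ideal.span_le.mpr _
      rintro x ⟨k, rfl⟩ d hd
      have hd0 : d = 0 := by
        rw [← degree_eq_zero_iff]; omega
      subst hd0
      exact coeff_zero_X k
    exact mul_mem_J hr' hs'

/-- Decomposition of a power series with zero constant term. -/
lemma eq_sum_X_mul (f : MvPowerSeries (Fin p) 𝕜)
    (h0 : MvPowerSeries.coeff 0 f = 0) :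
    f = ∑ k : Fin p, (MvPowerSeries.X k) *
      (show MvPowerSeries (Fin p) 𝕜 from
        fun e => if ∀ k' < k, e k' = 0 then MvPowerSeries.coeff (e + single k 1) f else 0) := by
  ext d
  rw [map_sum]
  by_cases hd : d = 0
  · subst hd
    rw [h0]
    symm
    apply Finset.sum_eq_zero
    intro k _
    exact coeff_zero_X_mul _ k
  · have hne : d.support.Nonempty := Finsupp.support_nonempty_iff.mpr hd
    set k₀ := d.support.min' hne with hk₀
    have hk₀mem : k₀ ∈ d.support := d.support.min'_mem hne
    have hk₀ne : d k₀ ≠ 0 := Finsupp.mem_support_iff.mp hk₀mem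
    have hlt : ∀ k' < k₀, d k' = 0 := by
      intro k' hk'
      by_contra hne'
      exact absurd (d.support.min'_le k' (Finsupp.mem_support_iff.mpr hne')) (not_le.mpr hk')
    symm
    rw [Finset.sum_eq_single k₀]
    · rw [X_def, coeff_monomial_mul]
      rw [if_pos (Finsupp.single_le_iff.mpr (Nat.one_le_iff_ne_zero.mpr hk₀ne))]
      rw [one_mul, coeff_apply]
      rw [if_pos]
      · congr 1
        rw [tsub_add_cancel_of_le (Finsupp.single_le_iff.mpr (Nat.one_le_iff_ne_zero.mpr hk₀ne))]
      · intro k' hk'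
        rw [Finsupp.tsub_apply, Finsupp.single_eq_of_ne (ne_of_lt hk')]
        simp [hlt k' hk']
    · intro k _ hk
      rw [X_def, coeff_monomial_mul]
      by_cases hle : Finsupp.single k 1 ≤ d
      · rw [if_pos hle, coeff_apply]
        rw [if_neg, mul_zero]
        intro hall
        have hkmem : k ∈ d.support :=
          Finsupp.mem_support_iff.mpr (by have := Finsupp.single_le_iff.mp hle; omega)
        have : k₀ ≤ k := d.support.min'_le k hkmem
        have hk₀k : k₀ < k := lt_of_le_of_ne this (by simpa [eq_comm] using hk)
        have := hall k₀ hk₀k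
        rw [Finsupp.tsub_apply, Finsupp.single_eq_of_ne (ne_of_lt hk₀k)] at this
        omega
      · rw [if_neg hle]
    · intro h; exact absurd (Finset.mem_univ k₀) h

lemma J_le_pow (j : ℕ) : J 𝕜 p j ≤ (mIdeal 𝕜 p) ^ j := by
  induction j with
  | zero => intro f _; simp [Ideal.one_eq_top]
  | succ j ih =>
    intro f hf
    have h0 : MvPowerSeries.coeff 0 f = 0 := hf 0 (by simp [map_zero])
    rw [eq_sum_X_mul f h0]
    apply Ideal.sum_mem
    intro k _
    rw [pow_succ']
    apply Ideal.mul_mem_mul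
    · exact Ideal.subset_span ⟨k, rfl⟩
    · apply ih
      intro e he
      rw [coeff_apply]
      by_cases hc : ∀ k' < k, e k' = 0
      · rw [if_pos hc]
        apply hf
        rw [degree_add]
        have h1 : (Finsupp.single k (1:ℕ)).degree = 1 := by
          simp [Finsupp.degree_single]
        omega
      · rw [if_neg hc]

end S2Aux

namespace S2Aux

variable {𝕜 : Type*} [CommRing 𝕜] {p i : ℕ}

lemma eq_zero_of_mem_all {f : MvPowerSeries (Fin p) 𝕜}
    (h : ∀ n : ℕ, f ∈ (mIdeal 𝕜 p) ^ n) : f = 0 := by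
  ext d
  rw [map_zero]
  exact pow_le_J (d.degree + 1) (h (d.degree + 1)) d (lt_add_one _)

section Phi

variable (φ : MvPowerSeries (Fin p) 𝕜 →ₗ[𝕜] MvPowerSeries (Fin p) 𝕜)
variable (hφ : ∀ j : ℕ, ∀ f ∈ (mIdeal 𝕜 p) ^ j, φ f ∈ (mIdeal 𝕜 p) ^ (j + i))

include hφ in
lemma pow_apply_mem (n j : ℕ) (f : MvPowerSeries (Fin p) 𝕜) (hf : f ∈ (mIdeal 𝕜 p) ^ j) :
    (φ ^ n) f ∈ (mIdeal 𝕜 p) ^ (j + n * i) := by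
  induction n with
  | zero => simpa using hf
  | succ n ih =>
    have h1 : (φ ^ (n + 1)) f = φ ((φ ^ n) f) := by
      rw [pow_succ']; rfl
    have h2 : j + (n + 1) * i = (j + n * i) + i := by ring
    rw [h1, h2]
    exact hφ _ _ ih

/-- Partial sums of the geometric-type series for the inverse of `1 + φ`. -/
noncomputable def S (f : MvPowerSeries (Fin p) 𝕜) (N : ℕ) : MvPowerSeries (Fin p) 𝕜 :=
  ∑ n ∈ Finset.range (N + 1), ((-1 : ℤ) ^ n • (φ ^ n) f)

lemma S_add_phi (f : MvPowerSeries (Fin p) 𝕜) (N : ℕ) :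
    S φ f N + φ (S φ f N) = f + (-1 : ℤ) ^ N • (φ ^ (N + 1)) f := by
  induction N with
  | zero => simp [S, Finset.range_one, pow_one]
  | succ N ihN =>
    have hS : S φ f (N + 1) = S φ f N + (-1 : ℤ) ^ (N + 1) • (φ ^ (N + 1)) f :=
      Finset.sum_range_succ _ _
    have hφφ : φ ((φ ^ (N + 1)) f) = (φ ^ (N + 2)) f := by rw [pow_succ' φ (N + 1)]; rfl
    have h2 : φ (S φ f N) = f + (-1 : ℤ) ^ N • (φ ^ (N + 1)) f - S φ f N := by
      rw [← ihN]; abel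
    have h3 : ((-1 : ℤ) ^ (N + 1)) = -(-1 : ℤ) ^ N := by ring
    rw [hS, map_add, map_zsmul, hφφ, h2, h3, neg_smul, neg_smul]
    abel

include hφ in
lemma S_sub_mem (hi : 1 ≤ i) (f : MvPowerSeries (Fin p) 𝕜) {N N' : ℕ} (h : N ≤ N') :
    S φ f N' - S φ f N ∈ (mIdeal 𝕜 p) ^ (N + 1) := by
  obtain ⟨K, rfl⟩ := Nat.exists_eq_add_of_le h
  induction K with
  | zero => simp
  | succ K ih =>
    have hS : S φ f (N + K + 1) = S φ f (N + K) + (-1 : ℤ) ^ (N + K + 1) • (φ ^ (N + K + 1)) f :=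
      Finset.sum_range_succ _ _
    have : N + (K + 1) = (N + K) + 1 := by ring
    rw [this, hS, add_sub_right_comm]
    apply add_mem (ih (Nat.le_add_right _ _))
    exact zsmul_mem (Ideal.pow_le_pow_right (by nlinarith) (pow_apply_mem φ hφ (N + K + 1) 0 f (by simp))) _

/-- The coefficientwise limit of the partial sums `S φ f N`. -/
noncomputable def hlim (f : MvPowerSeries (Fin p) 𝕜) : MvPowerSeries (Fin p) 𝕜 :=
  fun d => S φ f d.degree d

include hφ in
lemma hlim_sub_S_mem (hi : 1 ≤ i) (f : MvPowerSeries (Fin p) 𝕜) (N : ℕ) :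
    hlim φ f - S φ f N ∈ (mIdeal 𝕜 p) ^ (N + 1) := by
  apply J_le_pow
  intro d hd
  have hdN : d.degree ≤ N := by omega
  have h1 : MvPowerSeries.coeff d (hlim φ f) = MvPowerSeries.coeff d (S φ f d.degree) := rfl
  rw [map_sub, h1]
  have h2 : S φ f N - S φ f d.degree ∈ (mIdeal 𝕜 p) ^ (d.degree + 1) := S_sub_mem φ hφ hi f hdN
  have h3 : MvPowerSeries.coeff d (S φ f N - S φ f d.degree) = 0 :=
    pow_le_J _ h2 d (lt_add_one _)
  rw [map_sub] at h3
  linear_combination -h3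

include hφ in
lemma hlim_solves (hi : 1 ≤ i) (f : MvPowerSeries (Fin p) 𝕜) :
    hlim φ f + φ (hlim φ f) = f := by
  have key : ∀ N : ℕ, hlim φ f + φ (hlim φ f) - f ∈ (mIdeal 𝕜 p) ^ (N + 1) := by
    intro N
    have e1 : hlim φ f + φ (hlim φ f) - f =
        (hlim φ f - S φ f N) + φ (hlim φ f - S φ f N) + (S φ f N + φ (S φ f N) - f) := by
      rw [map_sub]; abel
    rw [e1]
    have m1 := hlim_sub_S_mem φ hφ hi f N
    have m2 : φ (hlim φ f - S φ f N) ∈ (mIdeal 𝕜 p) ^ (N + 1) :=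
      Ideal.pow_le_pow_right (by omega) (hφ (N + 1) _ m1)
    have m3 : S φ f N + φ (S φ f N) - f ∈ (mIdeal 𝕜 p) ^ (N + 1) := by
      rw [S_add_phi φ f N, add_sub_cancel_left]
      exact zsmul_mem (Ideal.pow_le_pow_right (by nlinarith) (pow_apply_mem φ hφ (N + 1) 0 f (by simp))) _
    exact add_mem (add_mem m1 m2) m3
  have : hlim φ f + φ (hlim φ f) - f = 0 := by
    apply eq_zero_of_mem_all
    intro n
    cases n with
    | zero => simp [Ideal.one_eq_top]
    | succ n => exact key n
  linear_combination this

include hφ in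
lemma inj_one_add (hi : 1 ≤ i) {a b : MvPowerSeries (Fin p) 𝕜}
    (hab : a + φ a = b + φ b) : a = b := by
  have hx : (a - b) + φ (a - b) = 0 := by rw [map_sub]; linear_combination hab
  have hmem : ∀ n : ℕ, a - b ∈ (mIdeal 𝕜 p) ^ n := by
    intro n
    induction n with
    | zero => simp [Ideal.one_eq_top]
    | succ n ih =>
      have : a - b = -(φ (a - b)) := by linear_combination hx
      rw [this]
      exact neg_mem (Ideal.pow_le_pow_right (by omega) (hφ n _ ih))
  have := eq_zero_of_mem_all hmem
  linear_combination this

end Phi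

end S2Aux

open S2Aux

/-- for a 𝕜-linear `φ` with `φ(m^j) ⊆ m^{j+i}` (`i ≥ 1`), the map `1 + φ`
is a 𝕜-algebra automorphism of `R = 𝕜[[x_1,…,x_p]]` iff `φ` satisfies the almost
Leibniz rule; consequently `Aut^{(i)}_𝕜(R)` equals the set of all `1 + φ` with `φ`
𝕜-linear, filtration-shifting by `i`, satisfying the almost Leibniz rule. -/
theorem statement2 (𝕜 : Type*) [CommRing 𝕜] (p : ℕ) (hp : 1 ≤ p) (i : ℕ) (hi : 1 ≤ i) :
    (∀ φ : MvPowerSeries (Fin p) 𝕜 →ₗ[𝕜] MvPowerSeries (Fin p) 𝕜,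
      (∀ j : ℕ, ∀ f ∈ (mIdeal 𝕜 p) ^ j, φ f ∈ (mIdeal 𝕜 p) ^ (j + i)) →
      ((∃ ψ : MvPowerSeries (Fin p) 𝕜 ≃ₐ[𝕜] MvPowerSeries (Fin p) 𝕜,
          ∀ f, ψ f = f + φ f) ↔ AlmostLeibniz φ)) ∧
    {g : MvPowerSeries (Fin p) 𝕜 ≃ₐ[𝕜] MvPowerSeries (Fin p) 𝕜 |
        (∀ j : ℕ, ∀ f ∈ (mIdeal 𝕜 p) ^ j, g f - f ∈ (mIdeal 𝕜 p) ^ (j + i)) ∧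
        (∀ j : ℕ, ∀ f ∈ (mIdeal 𝕜 p) ^ j, g.symm f - f ∈ (mIdeal 𝕜 p) ^ (j + i))}
      = {g : MvPowerSeries (Fin p) 𝕜 ≃ₐ[𝕜] MvPowerSeries (Fin p) 𝕜 |
        ∃ φ : MvPowerSeries (Fin p) 𝕜 →ₗ[𝕜] MvPowerSeries (Fin p) 𝕜,
          (∀ j : ℕ, ∀ f ∈ (mIdeal 𝕜 p) ^ j, φ f ∈ (mIdeal 𝕜 p) ^ (j + i)) ∧
          AlmostLeibniz φ ∧ ∀ f, g f = f + φ f} := by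
  constructor
  · -- Part 1
    intro φ hφ
    constructor
    · rintro ⟨ψ, hψ⟩ f₁ f₂
      have hm := map_mul ψ f₁ f₂
      rw [hψ, hψ, hψ] at hm
      linear_combination hm
    · intro hAL
      -- φ 1 = 0
      have h11 := hAL 1 1
      rw [one_mul] at h11
      have h1 : φ 1 * (1 + φ 1) = 0 := by linear_combination -h11
      have hmem1 : φ 1 ∈ (mIdeal 𝕜 p) ^ (0 + i) :=
        hφ 0 1 (by simp [Ideal.one_eq_top])
      have hc : MvPowerSeries.constantCoeff (φ 1) = 0 := by
        have := pow_le_J (0 + i) hmem1 0 (by simpa [map_zero] using Nat.succ_le_iff.mp hi)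
        simpa using this
      have hu : IsUnit (1 + φ 1) := by
        rw [MvPowerSeries.isUnit_iff_constantCoeff, map_add, map_one, hc, add_zero]
        exact isUnit_one
      have hφ1 : φ 1 = 0 := by
        rcases hu with ⟨u, hu⟩
        have : φ 1 = φ 1 * (1 + φ 1) * ↑u⁻¹ := by
          rw [mul_assoc, ← hu, Units.mul_inv, mul_one]
        rw [h1, zero_mul] at this
        exact this
      -- the algebra homomorphism 1 + φ
      let ψ₀ : MvPowerSeries (Fin p) 𝕜 →ₐ[𝕜] MvPowerSeries (Fin p) 𝕜 :=
        AlgHom.ofLinearMap (LinearMap.id + φ)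
          (by simp [hφ1])
          (fun x y => by
            simp only [LinearMap.add_apply, LinearMap.id_apply]
            linear_combination hAL x y)
      have hψ₀ : ∀ f, ψ₀ f = f + φ f := fun f => rfl
      have hinj : Function.Injective ψ₀ := by
        intro a b hab
        rw [hψ₀, hψ₀] at hab
        exact inj_one_add φ hφ hi hab
      have hsurj : Function.Surjective ψ₀ := by
        intro f
        exact ⟨hlim φ f, by rw [hψ₀]; exact hlim_solves φ hφ hi f⟩
      refine ⟨AlgEquiv.ofBijective ψ₀ ⟨hinj, hsurj⟩, fun f => ?_⟩
      show ψ₀ f = f + φ f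
      exact hψ₀ f
  · -- Part 2
    ext g
    simp only [Set.mem_setOf_eq]
    constructor
    · rintro ⟨hg, -⟩
      refine ⟨(g : MvPowerSeries (Fin p) 𝕜 ≃ₐ[𝕜] MvPowerSeries (Fin p) 𝕜).toLinearMap
          - LinearMap.id, ?_, ?_, ?_⟩
      · intro j f hf
        simpa using hg j f hf
      · intro f₁ f₂
        simp only [LinearMap.sub_apply, AlgEquiv.toLinearMap_apply, LinearMap.id_apply]
        have := map_mul g f₁ f₂
        linear_combination this
      · intro f
        simp only [LinearMap.sub_apply, AlgEquiv.toLinearMap_apply, LinearMap.id_apply]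
        ring
    · rintro ⟨φ, hφ, hAL, hgf⟩
      constructor
      · intro j f hf
        rw [hgf]
        simpa using hφ j f hf
      · intro j f hf
        set h := g.symm f with hh
        have hfh : h + φ h = f := by
          have h1 := hgf h
          rw [hh, g.apply_symm_apply] at h1
          linear_combination -h1
        have hmem : ∀ k, k ≤ j → h ∈ (mIdeal 𝕜 p) ^ k := by
          intro k
          induction k with
          | zero => intro _; simp [Ideal.one_eq_top]
          | succ k ih =>
            intro hk
            have ihk := ih (Nat.le_of_succ_le hk)
            have he : h = f - φ h := by linear_combination hfh
            rw [he]
            apply sub_mem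
            · exact Ideal.pow_le_pow_right hk hf
            · exact Ideal.pow_le_pow_right (by omega) (hφ k h ihk)
        have he2 : g.symm f - f = -(φ h) := by rw [← hh, ← hfh]; ring
        rw [he2]
        exact neg_mem (hφ j h (hmem j le_rfl))
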